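/- Let g be an invertible formal series (a 'meromorphic Jacobi form of weight -1') in a commutative ℚ-algebra with derivation D_τ, and set E = D_τ(g)/g and H = D_τ^2(g)/g. Let θ_g = D_τ + E·wt be the modified Serre derivative, where wt acts by multiplication by the weight. Then for f of weight k, setting f = g_{k+1}/g^{k+1}, the equation D_τ^2 g_{k+1} = (k+1)^2 H g_{k+1} is equivalent to D_τ^2 f + 2(k+1) E D_τ f + k(k+1)(E^2 - H) f = 0, which is equivalent to θ_g^2 f = H·k(k+2)·f (i.e. θ_g applied twice, with f of weight k so θ_g f has weight k+2: (D_τ + (k+2)E)(D_τ + kE) f = k(k+2) H f). -/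

import Mathlib

noncomputable section

/-- **Section 5.1** (the general Kaneko–Zagier construction).
Let `g` be invertible in a commutative `ℚ`-algebra `R` with derivation `D = D_τ`, set
`E = D(g)/g`, `H = D²(g)/g`, and for a weight-`k` element `f` let the modified Serre
derivative be `θ_{g,k}(f) = D f + k E f`.  For `f = g_{k+1}/g^{k+1}`, the following are
equivalent:
1. `D² g_{k+1} = (k+1)² H g_{k+1}`;
2. `D² f + 2(k+1) E D f + k(k+1)(E² - H) f = 0`;
3. `θ_{g,k+2}(θ_{g,k}(f)) = k(k+2) H f`. -/
theorem stmt19 {R : Type*} [CommRing R] [Algebra ℚ R] (D : Derivation ℚ R R)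
    (g : Rˣ) (k : ℤ) (gk : R)
    (E H f : R)
    (hE : E = D (g : R) * ((g⁻¹ : Rˣ) : R))
    (hH : H = D (D (g : R)) * ((g⁻¹ : Rˣ) : R))
    (hf : f = gk * (((g ^ (k + 1))⁻¹ : Rˣ) : R)) :
    ((D (D gk) = ((k + 1 : ℤ) : R) ^ 2 * (H * gk)) ↔
      (D (D f) + 2 * ((k + 1 : ℤ) : R) * (E * D f)
        + ((k : ℤ) : R) * ((k + 1 : ℤ) : R) * ((E ^ 2 - H) * f) = 0)) ∧
    ((D (D f) + 2 * ((k + 1 : ℤ) : R) * (E * D f)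
        + ((k : ℤ) : R) * ((k + 1 : ℤ) : R) * ((E ^ 2 - H) * f) = 0) ↔
      (D (D f + ((k : ℤ) : R) * (E * f))
        + ((k + 2 : ℤ) : R) * (E * (D f + ((k : ℤ) : R) * (E * f)))
        = ((k : ℤ) : R) * ((k + 2 : ℤ) : R) * (H * f))) := by
  have hDc : ∀ n : ℤ, D ((n : ℤ) : R) = 0 := by
    intro n
    rw [← map_intCast (algebraMap ℚ R) n]
    exact D.map_algebraMap _
  have hba : ((g⁻¹ : Rˣ) : R) * (g : R) = 1 := Units.inv_mul g
  have hDb : D ((g⁻¹ : Rˣ) : R) = -(E * ((g⁻¹ : Rˣ) : R)) := by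
    have h0 := congrArg D hba
    rw [D.leibniz, smul_eq_mul, smul_eq_mul] at h0
    rw [show D (1:R) = 0 from Derivation.map_one_eq_zero D] at h0
    subst hE
    linear_combination ((g⁻¹ : Rˣ) : R) * h0 - D ((g⁻¹ : Rˣ) : R) * hba
  have key : ∀ n : ℤ, D ((g ^ n : Rˣ) : R) = ((n : ℤ) : R) * E * ((g ^ n : Rˣ) : R) := by
    intro n
    induction n using Int.induction_on with
    | zero => simp
    | succ m ih =>
      rw [zpow_add_one, Units.val_mul, D.leibniz, smul_eq_mul, smul_eq_mul, ih]
      push_cast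
      have hEg : E * (g : R) = D (g : R) := by
        rw [hE]; linear_combination D (g : R) * hba
      linear_combination -(((g ^ (m : ℤ) : Rˣ) : R) * hEg)
    | pred m ih =>
      rw [zpow_sub_one, Units.val_mul, D.leibniz, smul_eq_mul, smul_eq_mul, ih, hDb]
      push_cast
      ring
  have hDE : D E = H - E ^ 2 := by
    rw [hE, hH, D.leibniz, smul_eq_mul, smul_eq_mul, hDb]
    rw [hE]
    ring
  set c : R := ((k + 1 : ℤ) : R) with hc
  set u : R := ((g ^ (k + 1) : Rˣ) : R) with huu
  have hu : D u = c * E * u := key (k + 1)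
  have hgk : gk = f * u := by
    rw [hf, mul_assoc, ← Units.val_mul, inv_mul_cancel, Units.val_one, mul_one]
  have hDgk : D gk = f * (c * E * u) + u * D f := by
    rw [hgk, D.leibniz, smul_eq_mul, smul_eq_mul, hu]
  have h1 : D (D gk)
      = (D (D f) + 2 * c * (E * D f) + (c * H + c * (c - 1) * E ^ 2) * f) * u := by
    rw [hDgk]
    simp only [map_add, Derivation.leibniz, smul_eq_mul]
    rw [hu, hDE, hDc]
    ring
  constructor
  · rw [h1, hgk, show c ^ 2 * (H * (f * u)) = (c ^ 2 * (H * f)) * u by ring,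
      Units.mul_left_inj]
    constructor <;> intro h
    · push_cast [hc] at h ⊢; linear_combination h
    · push_cast [hc] at h ⊢; linear_combination h
  · have h3 : D (D f + ((k : ℤ) : R) * (E * f))
        = D (D f) + ((k : ℤ) : R) * (E * D f + f * (H - E ^ 2)) := by
      simp only [map_add, Derivation.leibniz, smul_eq_mul]
      rw [hDE, hDc]
      ring
    rw [h3]
    constructor <;> intro h
    · push_cast [hc] at h ⊢; linear_combination h
    · push_cast [hc] at h ⊢; linear_combination h

end
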